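/- Let X = [[0,1],[1,0]], Y = [[0,−i],[i,0]], Z = [[1,0],[0,−1]] be the Pauli matrices and let X^{⊗3}, Y^{⊗3}, Z^{⊗3} denote their threefold Kronecker powers, which are 8×8 matrices. Then the joint rank-4 numerical range Λ_4(X^{⊗3}, Y^{⊗3}, Z^{⊗3}) is non-empty (it contains (0,0,1)), while the joint rank (4:2)-matricial range Λ_{(4:2)}(X^{⊗3}, Y^{⊗3}, Z^{⊗3}) is empty. -/

import Mathlib

open Matrix Kronecker

/-- The joint rank `(k:p)`-matricial range of a tuple `A` of square complex matrices
(rows/columns indexed by a finite type `I` of cardinality `n`, tuple indexed by `J`):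
tuples `(D_j)` of `p × p` complex diagonal matrices such that there is an `n × (kp)`
matrix `V` with `V* V = I_{kp}` and `V* A_j V = D_j ⊗ I_k` for all `j`. -/
def matricialRange {I J : Type*} [Fintype I] (k p : ℕ)
    (A : J → Matrix I I ℂ) : Set (J → Matrix (Fin p) (Fin p) ℂ) :=
  {D | (∀ j, (D j).IsDiag) ∧
    ∃ V : Matrix I (Fin p × Fin k) ℂ, Vᴴ * V = 1 ∧
      ∀ j, Vᴴ * A j * V = (D j) ⊗ₖ (1 : Matrix (Fin k) (Fin k) ℂ)}

/-- The joint rank-`k` numerical range `Λ_k(A) = Λ_{(k:1)}(A)`, with elements identified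
with scalar tuples: `x ∈ Λ_k(A)` iff there is `V` with `V* V = I_k` and `V* A_j V = x_j I_k`. -/
def jointRankRange {I J : Type*} [Fintype I] (k : ℕ)
    (A : J → Matrix I I ℂ) : Set (J → ℂ) :=
  {x | ∃ V : Matrix I (Fin k) ℂ, Vᴴ * V = 1 ∧ ∀ j, Vᴴ * A j * V = x j • 1}

/-- The joint rank-`k` numerical range, projection form: `x ∈ Λ_k(A)` iff there is a
rank-`k` orthogonal projection `P` with `P A_j P = x_j P` for all `j`. -/
def jointRankRangeP {n : ℕ} {J : Type*} (k : ℕ)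
    (A : J → Matrix (Fin n) (Fin n) ℂ) : Set (J → ℂ) :=
  {x | ∃ P : Matrix (Fin n) (Fin n) ℂ, P.IsHermitian ∧ P * P = P ∧ P.rank = k ∧
    ∀ j, P * A j * P = x j • P}

/-- The Pauli matrix `X`. -/
def pauliX : Matrix (Fin 2) (Fin 2) ℂ := !![0, 1; 1, 0]

/-- The Pauli matrix `Y`. -/
def pauliY : Matrix (Fin 2) (Fin 2) ℂ := !![0, -Complex.I; Complex.I, 0]

/-- The Pauli matrix `Z`. -/
def pauliZ : Matrix (Fin 2) (Fin 2) ℂ := !![1, 0; 0, -1]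

/-- Selector of the four even-weight basis indices (eigenspace of `Z^{⊗3}` for eigenvalue 1). -/
def idx4 : Fin 4 → (Fin 2 × Fin 2) × Fin 2 :=
  ![((0, 0), 0), ((0, 1), 1), ((1, 0), 1), ((1, 1), 0)]

/-- The isometry whose columns are the four even-weight standard basis vectors. -/
def V0 : Matrix ((Fin 2 × Fin 2) × Fin 2) (Fin 4) ℂ :=
  Matrix.of fun i j => if i = idx4 j then 1 else 0

lemma compressV0 (A : Matrix ((Fin 2 × Fin 2) × Fin 2) ((Fin 2 × Fin 2) × Fin 2) ℂ) :
    V0ᴴ * A * V0 = Matrix.of fun j j' => A (idx4 j) (idx4 j') := by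
  ext j j'
  simp [Matrix.mul_apply, V0, conjTranspose_apply, apply_ite, ite_mul, mul_ite,
    Finset.sum_ite_eq, Finset.sum_ite_eq']

lemma V0unit : V0ᴴ * V0 = 1 := by
  ext j j'
  fin_cases j <;> fin_cases j' <;>
    simp [Matrix.mul_apply, V0, conjTranspose_apply, apply_ite, ite_mul, mul_ite,
      Finset.sum_ite_eq, Finset.sum_ite_eq', idx4, Matrix.one_apply] <;> simp [Fintype.sum_prod_type, Fin.sum_univ_two]

lemma neg_kron' {l m n p : Type*} (A : Matrix l m ℂ) (B : Matrix n p ℂ) :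
    (-A) ⊗ₖ B = -(A ⊗ₖ B) := by
  ext i j
  simp [Matrix.kroneckerMap_apply]

lemma kron_neg' {l m n p : Type*} (A : Matrix l m ℂ) (B : Matrix n p ℂ) :
    A ⊗ₖ (-B) = -(A ⊗ₖ B) := by
  ext i j
  simp [Matrix.kroneckerMap_apply]

/-- Example 3.5: for the threefold Kronecker powers of the Pauli
matrices, the joint rank-4 numerical range `Λ_4(X^{⊗3}, Y^{⊗3}, Z^{⊗3})` is nonempty
(it contains `(0, 0, 1)`), while `Λ_{(4:2)}(X^{⊗3}, Y^{⊗3}, Z^{⊗3})` is empty. -/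
theorem stmt19 :
    (![0, 0, 1] : Fin 3 → ℂ) ∈
      jointRankRange 4
        ![pauliX ⊗ₖ pauliX ⊗ₖ pauliX,
          pauliY ⊗ₖ pauliY ⊗ₖ pauliY,
          pauliZ ⊗ₖ pauliZ ⊗ₖ pauliZ] ∧
    matricialRange 4 2
        ![pauliX ⊗ₖ pauliX ⊗ₖ pauliX,
          pauliY ⊗ₖ pauliY ⊗ₖ pauliY,
          pauliZ ⊗ₖ pauliZ ⊗ₖ pauliZ] = ∅ := by
  constructor
  · -- Part 1: (0,0,1) is in the joint rank-4 numerical range.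
    refine ⟨V0, V0unit, ?_⟩
    intro j
    fin_cases j
    · show V0ᴴ * (pauliX ⊗ₖ pauliX ⊗ₖ pauliX) * V0 = (0 : ℂ) • 1
      rw [compressV0]
      ext j j'
      fin_cases j <;> fin_cases j' <;>
        simp [idx4, pauliX, Matrix.kroneckerMap_apply]
    · show V0ᴴ * (pauliY ⊗ₖ pauliY ⊗ₖ pauliY) * V0 = (0 : ℂ) • 1
      rw [compressV0]
      ext j j'
      fin_cases j <;> fin_cases j' <;>
        simp [idx4, pauliY, Matrix.kroneckerMap_apply]
    · show V0ᴴ * (pauliZ ⊗ₖ pauliZ ⊗ₖ pauliZ) * V0 = (1 : ℂ) • 1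
      rw [compressV0]
      ext j j'
      fin_cases j <;> fin_cases j' <;>
        simp [idx4, pauliZ, Matrix.kroneckerMap_apply, Matrix.one_apply]
  · -- Part 2: the rank (4:2)-matricial range is empty.
    rw [Set.eq_empty_iff_forall_notMem]
    rintro D ⟨hdiag, V, hV, hA⟩
    have hX2 : pauliX * pauliX = 1 := by
      ext i j; fin_cases i <;> fin_cases j <;>
        simp [pauliX, Matrix.mul_apply, Fin.sum_univ_two, Matrix.one_apply]
    have hY2 : pauliY * pauliY = 1 := by
      ext i j; fin_cases i <;> fin_cases j <;>
        simp [pauliY, Matrix.mul_apply, Fin.sum_univ_two, Matrix.one_apply]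
    have hXY : pauliX * pauliY = (-1 : ℂ) • (pauliY * pauliX) := by
      ext i j; fin_cases i <;> fin_cases j <;>
        simp [pauliX, pauliY, Matrix.mul_apply, Fin.sum_univ_two]
    set A1 := pauliX ⊗ₖ pauliX ⊗ₖ pauliX with hA1def
    set A2 := pauliY ⊗ₖ pauliY ⊗ₖ pauliY with hA2def
    have hA1sq : A1 * A1 = 1 := by
      rw [hA1def, ← Matrix.mul_kronecker_mul, ← Matrix.mul_kronecker_mul, hX2,
        Matrix.one_kronecker_one, Matrix.one_kronecker_one]
    have hA2sq : A2 * A2 = 1 := by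
      rw [hA2def, ← Matrix.mul_kronecker_mul, ← Matrix.mul_kronecker_mul, hY2,
        Matrix.one_kronecker_one, Matrix.one_kronecker_one]
    have hAC : A1 * A2 = -(A2 * A1) := by
      rw [hA1def, hA2def, ← Matrix.mul_kronecker_mul, ← Matrix.mul_kronecker_mul,
        ← Matrix.mul_kronecker_mul, ← Matrix.mul_kronecker_mul, hXY]
      simp [neg_kron', kron_neg']
    have e : ((Fin 2 × Fin 2) × Fin 2) ≃ (Fin 2 × Fin 4) :=
      Fintype.equivOfCardEq (by simp)
    have hVV : V * Vᴴ = 1 := (Matrix.mul_eq_one_comm_of_equiv e).mpr hV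
    have key : ∀ M N : Matrix ((Fin 2 × Fin 2) × Fin 2) ((Fin 2 × Fin 2) × Fin 2) ℂ,
        (Vᴴ * M * V) * (Vᴴ * N * V) = Vᴴ * (M * N) * V := by
      intro M N
      simp only [← Matrix.mul_assoc]
      rw [Matrix.mul_assoc (Vᴴ * M) V Vᴴ, hVV, Matrix.mul_one]
    have h1 := hA 0
    have h2 := hA 1
    simp only [Matrix.cons_val_zero, Matrix.cons_val_one, Matrix.head_cons] at h1 h2
    set B1 := (D 0) ⊗ₖ (1 : Matrix (Fin 4) (Fin 4) ℂ)
    set B2 := (D 1) ⊗ₖ (1 : Matrix (Fin 4) (Fin 4) ℂ)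
    have e1 : B1 * B1 = 1 := by
      rw [← h1, key, hA1sq, Matrix.mul_one, hV]
    have e2 : B2 * B2 = 1 := by
      rw [← h2, key, hA2sq, Matrix.mul_one, hV]
    have eAC : B1 * B2 = -(B2 * B1) := by
      rw [← h1, ← h2, key, key, hAC]
      simp [Matrix.mul_neg, Matrix.neg_mul]
    have eComm : B1 * B2 = B2 * B1 := by
      have hd0 := (hdiag 0).diagonal_diag
      have hd1 := (hdiag 1).diagonal_diag
      show ((D 0) ⊗ₖ _) * ((D 1) ⊗ₖ _) = ((D 1) ⊗ₖ _) * ((D 0) ⊗ₖ _)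
      rw [← Matrix.mul_kronecker_mul, ← Matrix.mul_kronecker_mul, ← hd0, ← hd1,
        Matrix.diagonal_mul_diagonal, Matrix.diagonal_mul_diagonal]
      have hc : (fun i => (D 0).diag i * (D 1).diag i)
          = fun i => (D 1).diag i * (D 0).diag i := funext fun i => mul_comm _ _
      rw [hc]
    have hC0 : B1 * B2 = 0 := by
      have h : (2 : ℂ) • (B1 * B2) = 0 := by
        rw [two_smul]; nth_rewrite 1 [eAC, eComm]; simp
      simpa using (smul_eq_zero.mp h).resolve_left (by norm_num)
    have hcontra : (1 : Matrix (Fin 2 × Fin 4) (Fin 2 × Fin 4) ℂ) = 0 := by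
      calc (1 : Matrix (Fin 2 × Fin 4) (Fin 2 × Fin 4) ℂ) = (B1 * B1) * (B2 * B2) := by
            rw [e1, e2, Matrix.one_mul]
        _ = B1 * (B1 * B2) * B2 := by simp only [Matrix.mul_assoc]
        _ = 0 := by rw [hC0]; simp
    simpa using congrFun (congrFun hcontra ⟨0, 0⟩) ⟨0, 0⟩
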